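/- Corollary 3 (convergence-time estimate for the hysteresis supervisor). Consider supervisor data and a hysteresis-supervised output trajectory (y, v, (t_j), (q_j)) with v ≡ 0 and q_0 < M. Let dwell-time functions be given as follows: a constant T_0 > 0 with β_0(Δ_1, T_0) = Δ_1/2; and, for 1 ≤ q ≤ M, T_q defined on [Δ_q, Δ_{q+1}) (on [Δ_M, ∞) for q = M) by β_q(s, T_q(s)) = χ_{q−1}(Δ_q). Assume the switching sequence is finite with last mode q_N = 0, that t_{j+1} − t_j ≤ T_{q_j}(y(t_j)) for every j < N, and that either (no upward switch) q_{j+1} = q_j − 1 for every j < N, or (one initial upward switch) q_1 = q_0 + 1 with y(t_1) = Δ_{q_0+1} and q_{j+1} = q_j − 1 for every 1 ≤ j < N. Then the time T_{Δ₁/2} := inf{ t ≥ 0 : y(t) ≤ Δ_1/2 } satisfies T_{Δ₁/2} ≤ T_{q_0}(y(0)) + T_{q_0+1}(Δ_{q_0+1}) + Σ_{k=0}^{q_0} T̄_k, where T̄_0 := T_0 and, for k ≥ 1, T̄_k := sup_{Δ_k ≤ s < Δ_{k+1}} T_k(s) (a finite quantity). -/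
import Mathlib


open Set Filter

/-- A class-`K` function: continuous, strictly increasing on `[0,∞)`, vanishing at `0`. -/
def ClassK (γ : ℝ → ℝ) : Prop :=
  ContinuousOn γ (Ici 0) ∧ StrictMonoOn γ (Ici 0) ∧ γ 0 = 0

/-- A class-`KL` function: class `K` in the first argument for every fixed second argument
`t ≥ 0`, and (for every fixed `s > 0`) continuous, strictly decreasing and tending to `0`
at `+∞` in the second argument. -/
def ClassKL (β : ℝ → ℝ → ℝ) : Prop :=
  (∀ t ≥ (0:ℝ), ClassK (fun s => β s t)) ∧
  ∀ s > (0:ℝ), ContinuousOn (β s) (Ici 0) ∧ StrictAntiOn (β s) (Ici 0) ∧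
    Tendsto (β s) atTop (nhds 0)

/-- Supervisor data: number of thresholds `M ≥ 1`, thresholds
`0 = Δ 0 < Δ 1 < ⋯ < Δ M`, class-`KL` bounds `β q` with `β q s 0 > s` for `s > 0` and
`β q (Δ (q+1)) 0 ≤ Δ (q+2)` whenever `q+2 ≤ M`, and inverses `χ q` of `s ↦ β q s 0`. -/
structure SupervisorData where
  M : ℕ
  Δ : ℕ → ℝ
  β : ℕ → ℝ → ℝ → ℝ
  χ : ℕ → ℝ → ℝ
  hM : 1 ≤ M
  hΔ0 : Δ 0 = 0
  hΔlt : ∀ q < M, Δ q < Δ (q + 1)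
  hβKL : ∀ q ≤ M, ClassKL (β q)
  hβgt : ∀ q ≤ M, ∀ s > (0:ℝ), s < β q s 0
  hβΔ : ∀ q, q + 2 ≤ M → β q (Δ (q + 1)) 0 ≤ Δ (q + 2)
  hχ : ∀ q ≤ M, ∀ s ≥ (0:ℝ), 0 ≤ χ q s ∧ β q (χ q s) 0 = s

/-- A hysteresis-supervised output trajectory with disturbance bound `v`:
a continuous nonnegative output `y` on `[0,∞)`, a nondecreasing nonnegative disturbance
bound `v`, switching times `t 0 = 0 < t 1 < ⋯` (finite with last index `N` when `N ≠ ⊤`,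
in which case `t` is only constrained up to `N` and the last interval is `[t N, ∞)`;
infinite with `t j → ∞` when `N = ⊤`), and modes `q j ≤ M` switching only to adjacent modes (`q (j+1) = q j ± 1`),
satisfying the initial, switching and inter-switch SIIOS output conditions. -/
structure HysTraj (D : SupervisorData) where
  y : ℝ → ℝ
  v : ℝ → ℝ
  t : ℕ → ℝ
  q : ℕ → ℕ
  N : ℕ∞
  hy_cont : ContinuousOn y (Ici 0)
  hy_nonneg : ∀ s ≥ (0:ℝ), 0 ≤ y s
  hv_mono : MonotoneOn v (Ici 0)
  hv_nonneg : ∀ s ≥ (0:ℝ), 0 ≤ v s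
  ht0 : t 0 = 0
  ht_lt : ∀ j : ℕ, ((j + 1 : ℕ) : ℕ∞) ≤ N → t j < t (j + 1)
  ht_top : N = ⊤ → Tendsto t atTop atTop
  hq_le : ∀ j : ℕ, (j : ℕ∞) ≤ N → q j ≤ D.M
  hq_adj : ∀ j : ℕ, ((j + 1 : ℕ) : ℕ∞) ≤ N → q (j + 1) = q j + 1 ∨ q (j + 1) + 1 = q j
  h_init_lo : D.Δ (q 0) ≤ y 0
  h_init_hi : q 0 < D.M → y 0 < D.Δ (q 0 + 1)
  h_switch_lt : ∀ j : ℕ, 1 ≤ j → (j : ℕ∞) ≤ N → q j < D.M →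
    D.Δ (q j) ≤ y (t j) ∧ y (t j) ≤ D.χ (q j) (D.Δ (q j + 1))
  h_switch_top : ∀ j : ℕ, 1 ≤ j → (j : ℕ∞) ≤ N → q j = D.M →
    y (t j) = D.Δ D.M
  h_bound : ∀ j : ℕ, (j : ℕ∞) ≤ N → ∀ s : ℝ, t j ≤ s →
    (((j + 1 : ℕ) : ℕ∞) ≤ N → s ≤ t (j + 1)) →
    y s ≤ D.β (q j) (y (t j)) (s - t j) + v s

/-- **Corollary 3** (convergence-time estimate for the hysteresis supervisor):
with no disturbances (`v ≡ 0`), `q 0 < M`, dwell-time functions `T q` defined by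
`β 0 (Δ 1) T₀ = Δ 1 / 2` (with `T 0` constant equal to `T₀ > 0`) and
`β q s (T q s) = χ (q-1) (Δ q)` on `[Δ q, Δ (q+1))` (on `[Δ M, ∞)` for `q = M`),
a finite switching sequence with last mode `0`, interswitch times at most
`T (q j) (y (t j))`, and either purely descending switches or one initial upward switch
(`q 1 = q 0 + 1`, `y (t 1) = Δ (q 0 + 1)`) followed by descending switches, the time of
convergence into `{y ≤ Δ 1 / 2}` is at most
`T (q 0) (y 0) + T (q 0 + 1) (Δ (q 0 + 1)) + ∑_{k=0}^{q 0} T̄ k`, where `T̄ 0 = T₀` and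
`T̄ k = sup_{Δ k ≤ s < Δ (k+1)} T k s` (finite by assumption). -/
theorem cor3 (D : SupervisorData) (Tr : HysTraj D)
    (hv : ∀ s : ℝ, Tr.v s = 0)
    (hq0 : Tr.q 0 < D.M)
    (T0 : ℝ) (hT0pos : 0 < T0) (hT0eq : D.β 0 (D.Δ 1) T0 = D.Δ 1 / 2)
    (T : ℕ → ℝ → ℝ) (hT0' : ∀ s : ℝ, T 0 s = T0)
    (hT : ∀ q : ℕ, 1 ≤ q → q ≤ D.M → ∀ s : ℝ, D.Δ q ≤ s → (q < D.M → s < D.Δ (q + 1)) →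
      0 ≤ T q s ∧ D.β q s (T q s) = D.χ (q - 1) (D.Δ q))
    (hTbdd : ∀ k : ℕ, 1 ≤ k → k ≤ D.M →
      BddAbove {r : ℝ | ∃ s : ℝ, D.Δ k ≤ s ∧ s < D.Δ (k + 1) ∧ r = T k s})
    (Nfin : ℕ) (hN : Tr.N = (Nfin : ℕ∞))
    (hlast : Tr.q Nfin = 0)
    (hstep : ∀ j : ℕ, j < Nfin → Tr.t (j + 1) - Tr.t j ≤ T (Tr.q j) (Tr.y (Tr.t j)))
    (halt : (∀ j : ℕ, j < Nfin → Tr.q j = Tr.q (j + 1) + 1) ∨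
      (Tr.q 1 = Tr.q 0 + 1 ∧ Tr.y (Tr.t 1) = D.Δ (Tr.q 0 + 1) ∧
        ∀ j : ℕ, 1 ≤ j → j < Nfin → Tr.q j = Tr.q (j + 1) + 1)) :
    sInf {s : ℝ | 0 ≤ s ∧ Tr.y s ≤ D.Δ 1 / 2} ≤
      T (Tr.q 0) (Tr.y 0) + T (Tr.q 0 + 1) (D.Δ (Tr.q 0 + 1)) +
        ∑ k ∈ Finset.range (Tr.q 0 + 1),
          (if k = 0 then T0
           else sSup {r : ℝ | ∃ s : ℝ, D.Δ k ≤ s ∧ s < D.Δ (k + 1) ∧ r = T k s}) := by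
  classical
  obtain ⟨y, v, t, q, N, hy_cont, hy_nonneg, hv_mono, hv_nonneg, ht0, ht_lt, ht_top,
    hq_le, hq_adj, h_init_lo, h_init_hi, h_switch_lt, h_switch_top, h_bound⟩ := Tr
  simp only at *
  subst hN
  -- abbreviation for the sup-based dwell-time bounds
  set Tb : ℕ → ℝ := fun k =>
    if k = 0 then T0
    else sSup {r : ℝ | ∃ s : ℝ, D.Δ k ≤ s ∧ s < D.Δ (k + 1) ∧ r = T k s} with hTbdef
  have hTb0 : Tb 0 = T0 := by simp [hTbdef]
  -- monotonicity of thresholds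
  have hΔmono : ∀ b ≤ D.M, ∀ a ≤ b, D.Δ a ≤ D.Δ b := by
    intro b hb
    induction b with
    | zero => intro a ha; have : a = 0 := by omega
              rw [this]
    | succ n ih =>
      intro a ha
      rcases Nat.lt_or_ge a (n + 1) with h | h
      · exact le_trans (ih (by omega) a (by omega)) (le_of_lt (D.hΔlt n (by omega)))
      · have : a = n + 1 := by omega
        rw [this]
  have hΔnonneg : ∀ k ≤ D.M, 0 ≤ D.Δ k := by
    intro k hk
    have := hΔmono k hk 0 (Nat.zero_le _)
    rw [D.hΔ0] at this; exact this
  have hΔpos : ∀ k, 1 ≤ k → k ≤ D.M → 0 < D.Δ k := by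
    intro k h1 hk
    have h01 : D.Δ 0 < D.Δ 1 := D.hΔlt 0 D.hM
    rw [D.hΔ0] at h01
    exact lt_of_lt_of_le h01 (hΔmono k hk 1 h1)
  have hΔ1pos : 0 < D.Δ 1 := hΔpos 1 le_rfl D.hM
  -- χ is below the identity on positive arguments
  have hχlt : ∀ k ≤ D.M, ∀ s : ℝ, 0 < s → D.χ k s < s := by
    intro k hk s hs
    obtain ⟨hc0, hceq⟩ := D.hχ k hk s hs.le
    rcases eq_or_lt_of_le hc0 with h | h
    · exfalso
      have hz : D.β k 0 0 = 0 := ((D.hβKL k hk).1 0 le_rfl).2.2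
      rw [← h, hz] at hceq
      linarith
    · calc D.χ k s < D.β k (D.χ k s) 0 := D.hβgt k hk _ h
        _ = s := hceq
  -- monotonicity of β in the first argument
  have hβmono : ∀ k ≤ D.M, ∀ τ : ℝ, 0 ≤ τ → ∀ a b : ℝ, 0 ≤ a → a ≤ b →
      D.β k a τ ≤ D.β k b τ := by
    intro k hk τ hτ a b ha hab
    exact ((D.hβKL k hk).1 τ hτ).2.1.monotoneOn (mem_Ici.mpr ha)
      (mem_Ici.mpr (le_trans ha hab)) hab
  -- times are nonnegative
  have ht_nonneg : ∀ j ≤ Nfin, 0 ≤ t j := by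
    intro j hj
    induction j with
    | zero => rw [ht0]
    | succ n ih =>
      have h1 : t n < t (n + 1) := ht_lt n (by exact_mod_cast hj)
      exact le_of_lt (lt_of_le_of_lt (ih (by omega)) h1)
  -- output at the last switching time is below Δ 1
  have hytN : y (t Nfin) ≤ D.Δ 1 := by
    rcases Nat.eq_zero_or_pos Nfin with h0 | hpos
    · rw [h0, ht0]
      have h1 := h_init_hi hq0
      have hq00 : q 0 = 0 := h0 ▸ hlast
      rw [hq00] at h1
      norm_num at h1
      exact le_of_lt h1
    · have hqN : q Nfin < D.M := by
        rw [hlast]; exact lt_of_lt_of_le Nat.zero_lt_one D.hM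
      obtain ⟨_, h2⟩ := h_switch_lt Nfin hpos le_rfl hqN
      rw [hlast] at h2
      norm_num at h2
      exact le_trans h2 (le_of_lt (hχlt 0 (Nat.zero_le _) _ hΔ1pos))
  -- the candidate convergence time
  have htN0 : 0 ≤ t Nfin := ht_nonneg Nfin le_rfl
  have hSmem : 0 ≤ t Nfin + T0 ∧ y (t Nfin + T0) ≤ D.Δ 1 / 2 := by
    constructor
    · linarith
    · have hb := h_bound Nfin le_rfl (t Nfin + T0) (by linarith)
        (fun h => absurd (by exact_mod_cast h : Nfin + 1 ≤ Nfin) (by omega))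
      rw [hv, hlast] at hb
      have hsub : t Nfin + T0 - t Nfin = T0 := by ring
      rw [hsub, add_zero] at hb
      have hstep2 : D.β 0 (y (t Nfin)) T0 ≤ D.Δ 1 / 2 := by
        calc D.β 0 (y (t Nfin)) T0 ≤ D.β 0 (D.Δ 1) T0 :=
              hβmono 0 (Nat.zero_le _) T0 hT0pos.le _ _ (hy_nonneg _ htN0) hytN
          _ = D.Δ 1 / 2 := hT0eq
      linarith
  -- nonnegativity of the extra dwell-time term
  have hTq01 : 0 ≤ T (q 0 + 1) (D.Δ (q 0 + 1)) :=
    (hT (q 0 + 1) (by omega) hq0 (D.Δ (q 0 + 1)) le_rfl (fun h => D.hΔlt _ h)).1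
  -- element-wise bounds by Tb
  have hTbmem : ∀ k, 1 ≤ k → k < D.M → ∀ s : ℝ, D.Δ k ≤ s → s < D.Δ (k + 1) →
      T k s ≤ Tb k := by
    intro k h1 hk s hΔs hsΔ
    have hk0 : ¬ k = 0 := by omega
    have : Tb k = sSup {r : ℝ | ∃ s : ℝ, D.Δ k ≤ s ∧ s < D.Δ (k + 1) ∧ r = T k s} := by
      simp [hTbdef, hk0]
    rw [this]
    exact le_csSup (hTbdd k h1 hk.le) ⟨s, hΔs, hsΔ, rfl⟩
  have hTb_nonneg : ∀ k, 1 ≤ k → k < D.M → 0 ≤ Tb k := by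
    intro k h1 hk
    have hmem : T k (D.Δ k) ≤ Tb k := hTbmem k h1 hk _ le_rfl (D.hΔlt k hk)
    have h0 : 0 ≤ T k (D.Δ k) := (hT k h1 hk.le _ le_rfl (fun _ => D.hΔlt k hk)).1
    linarith
  have hterm : ∀ j, 1 ≤ j → j ≤ Nfin → 1 ≤ q j → q j ≤ q 0 →
      T (q j) (y (t j)) ≤ Tb (q j) := by
    intro j hj1 hjN h1 hqle
    have hqM : q j < D.M := lt_of_le_of_lt hqle hq0
    obtain ⟨hlo, hhi⟩ := h_switch_lt j hj1 (by exact_mod_cast hjN) hqM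
    have hΔq1 : 0 < D.Δ (q j + 1) := hΔpos (q j + 1) (by omega) (by omega)
    have hhi2 : y (t j) < D.Δ (q j + 1) :=
      lt_of_le_of_lt hhi (hχlt (q j) hqM.le _ hΔq1)
    exact hTbmem (q j) h1 hqM _ hlo hhi2
  -- the erase-zero index set and its sum
  have hEsum : ∑ k ∈ (Finset.range (q 0 + 1)).erase 0, Tb k + Tb 0
      = ∑ k ∈ Finset.range (q 0 + 1), Tb k :=
    Finset.sum_erase_add _ _ (Finset.mem_range.mpr (by omega))
  -- generic image bound
  have himg : ∀ s : Finset ℕ, (∀ j ∈ s, 1 ≤ j ∧ j ≤ Nfin ∧ 1 ≤ q j ∧ q j ≤ q 0) →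
      (∀ a ∈ s, ∀ b ∈ s, q a = q b → a = b) →
      ∑ j ∈ s, T (q j) (y (t j)) ≤ ∑ k ∈ (Finset.range (q 0 + 1)).erase 0, Tb k := by
    intro s hs hinj
    calc ∑ j ∈ s, T (q j) (y (t j)) ≤ ∑ j ∈ s, Tb (q j) :=
          Finset.sum_le_sum (fun j hj => by
            obtain ⟨h1, h2, h3, h4⟩ := hs j hj
            exact hterm j h1 h2 h3 h4)
      _ = ∑ k ∈ s.image q, Tb k := (Finset.sum_image hinj).symm
      _ ≤ ∑ k ∈ (Finset.range (q 0 + 1)).erase 0, Tb k := by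
          apply Finset.sum_le_sum_of_subset_of_nonneg
          · intro k hk
            obtain ⟨j, hj, rfl⟩ := Finset.mem_image.mp hk
            obtain ⟨h1, h2, h3, h4⟩ := hs j hj
            exact Finset.mem_erase.mpr ⟨by omega, Finset.mem_range.mpr (by omega)⟩
          · intro k hkE _
            obtain ⟨hk0, hkr⟩ := Finset.mem_erase.mp hkE
            have hkle := Finset.mem_range.mp hkr
            exact hTb_nonneg k (by omega) (by omega)
  -- telescoping
  have htele : t Nfin = ∑ j ∈ Finset.range Nfin, (t (j + 1) - t j) := by
    rw [Finset.sum_range_sub t Nfin, ht0, sub_zero]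
  have hsum1 : ∑ j ∈ Finset.range Nfin, (t (j + 1) - t j)
      ≤ ∑ j ∈ Finset.range Nfin, T (q j) (y (t j)) :=
    Finset.sum_le_sum (fun j hj => hstep j (Finset.mem_range.mp hj))
  -- the main combinatorial bound
  have hmain : ∑ j ∈ Finset.range Nfin, T (q j) (y (t j)) + T0
      ≤ T (q 0) (y 0) + T (q 0 + 1) (D.Δ (q 0 + 1)) + ∑ k ∈ Finset.range (q 0 + 1), Tb k := by
    rcases Nat.eq_zero_or_pos Nfin with hNf0 | hNfpos
    · subst hNf0
      have hq00 : q 0 = 0 := hlast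
      rw [hq00] at hTq01 ⊢
      rw [hT0']
      simp only [Finset.range_zero, Finset.sum_empty, zero_add]
      have hsum : ∑ k ∈ Finset.range (0 + 1), Tb k = T0 := by
        rw [Finset.sum_range_succ, Finset.range_zero, Finset.sum_empty, hTb0, zero_add]
      rw [hsum]
      linarith
    · rcases halt with hA | ⟨hb1, hb2, hbdesc⟩
      · -- purely descending
        have hdescA : ∀ j, j ≤ Nfin → q j + j = q 0 := by
          intro j
          induction j with
          | zero => intro _; omega
          | succ n ih =>
            intro hj
            have h1 := hA n (by omega)
            have h2 := ih (by omega)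
            omega
        have hsplit : ∑ j ∈ Finset.range Nfin, T (q j) (y (t j))
            = T (q 0) (y 0) + ∑ j ∈ Finset.Ico 1 Nfin, T (q j) (y (t j)) := by
          rw [Finset.range_eq_Ico, Finset.sum_eq_sum_Ico_succ_bot hNfpos, ht0]
        have hIcoA : ∑ j ∈ Finset.Ico 1 Nfin, T (q j) (y (t j))
            ≤ ∑ k ∈ (Finset.range (q 0 + 1)).erase 0, Tb k := by
          apply himg
          · intro j hj
            rw [Finset.mem_Ico] at hj
            have hd := hdescA j (by omega)
            have hdN := hdescA Nfin le_rfl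
            refine ⟨by omega, by omega, by omega, by omega⟩
          · intro a ha b hb hab
            rw [Finset.mem_Ico] at ha hb
            have h1 := hdescA a (by omega)
            have h2 := hdescA b (by omega)
            omega
        rw [hsplit]
        linarith [hEsum, hTb0, hIcoA, hTq01]
      · -- one initial upward switch, then descending
        have hNf2 : 2 ≤ Nfin := by
          by_contra hcon
          have h1 : Nfin = 1 := by omega
          rw [h1] at hlast
          omega
        have hdescB : ∀ j, 1 ≤ j → j ≤ Nfin → q j + j = q 0 + 2 := by
          intro j
          induction j with
          | zero => intro h; omega
          | succ n ih =>
            intro _ hj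
            rcases Nat.eq_zero_or_pos n with hn | hn
            · subst hn
              have := hb1
              simp only [Nat.zero_add]
              omega
            · have h1 := hbdesc n hn (by omega)
              have h2 := ih hn (by omega)
              omega
        have hsplit : ∑ j ∈ Finset.range Nfin, T (q j) (y (t j))
            = T (q 0) (y 0) + (T (q 0 + 1) (D.Δ (q 0 + 1))
              + ∑ j ∈ Finset.Ico 2 Nfin, T (q j) (y (t j))) := by
          rw [Finset.range_eq_Ico, Finset.sum_eq_sum_Ico_succ_bot (by omega : 0 < Nfin),
            Finset.sum_eq_sum_Ico_succ_bot (by omega : 1 < Nfin), ht0, hb1, hb2]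
        have hIcoB : ∑ j ∈ Finset.Ico 2 Nfin, T (q j) (y (t j))
            ≤ ∑ k ∈ (Finset.range (q 0 + 1)).erase 0, Tb k := by
          apply himg
          · intro j hj
            rw [Finset.mem_Ico] at hj
            have hd := hdescB j (by omega) (by omega)
            have hdN := hdescB Nfin (by omega) le_rfl
            refine ⟨by omega, by omega, by omega, by omega⟩
          · intro a ha b hb hab
            rw [Finset.mem_Ico] at ha hb
            have h1 := hdescB a (by omega) (by omega)
            have h2 := hdescB b (by omega) (by omega)
            omega
        rw [hsplit]
        linarith [hEsum, hTb0, hIcoB]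
  -- conclude
  have hinf : sInf {s : ℝ | 0 ≤ s ∧ y s ≤ D.Δ 1 / 2} ≤ t Nfin + T0 :=
    csInf_le ⟨0, fun x hx => hx.1⟩ hSmem
  have hfin : t Nfin + T0
      ≤ T (q 0) (y 0) + T (q 0 + 1) (D.Δ (q 0 + 1)) + ∑ k ∈ Finset.range (q 0 + 1), Tb k := by
    have h1 : t Nfin ≤ ∑ j ∈ Finset.range Nfin, T (q j) (y (t j)) := by
      rw [htele]; exact hsum1
    linarith
  exact le_trans hinf hfin
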